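/- For any tridiagonal n×n matrix A and the n×n matrix S with entries s_{i+1,i} = -1 on the subdiagonal and 1 everywhere else, per(A) = det(A ∘ S), where ∘ is the Hadamard product. -/

import Mathlib

def permanent {n : ℕ} (A : Matrix (Fin n) (Fin n) ℤ) : ℤ :=
  ∑ σ : Equiv.Perm (Fin n), ∏ i, A i (σ i)

def Smat (n : ℕ) : Matrix (Fin n) (Fin n) ℤ :=
  Matrix.of fun i j => if (i : ℕ) = (j : ℕ) + 1 then -1 else 1

lemma Smat_eq {n m : ℕ} (a b : Fin n) (c d : Fin m)
    (h : ((a:ℕ) = (b:ℕ) + 1) ↔ ((c:ℕ) = (d:ℕ) + 1)) :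
    Smat n a b = Smat m c d := by
  simp only [Smat, Matrix.of_apply, h]

lemma key : ∀ (n : ℕ) (σ : Equiv.Perm (Fin n)),
    (∀ i : Fin n, (σ i : ℕ) ≤ (i:ℕ) + 1 ∧ (i:ℕ) ≤ (σ i : ℕ) + 1) →
    ((Equiv.Perm.sign σ : ℤˣ) : ℤ) * ∏ i, Smat n i (σ i) = 1 := by
  intro n
  induction n with
  | zero => intro σ _; simp [Subsingleton.elim σ 1]
  | succ n ih =>
    intro σ hnear
    obtain ⟨p, e, rfl⟩ : ∃ p e, σ = Equiv.Perm.decomposeFin.symm (p, e) :=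
      ⟨_, _, (Equiv.Perm.decomposeFin.symm_apply_apply σ).symm⟩
    set σ := Equiv.Perm.decomposeFin.symm (p, e) with hσ
    have hp0 : σ 0 = p := Equiv.Perm.decomposeFin_symm_apply_zero p e
    have hple : (p : ℕ) ≤ 1 := by
      have := (hnear 0).1; simpa [hp0] using this
    interval_cases hpc : (p : ℕ)
    · -- p = 0
      have hp : p = 0 := Fin.ext hpc
      subst hp
      have happ : ∀ x : Fin n, σ x.succ = (e x).succ := by
        intro x
        rw [hσ, Equiv.Perm.decomposeFin_symm_apply_succ]; simp
      have hsign : Equiv.Perm.sign σ = Equiv.Perm.sign e := by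
        rw [hσ, Equiv.Perm.decomposeFin.symm_sign]; simp
      have hnear' : ∀ i : Fin n, (e i : ℕ) ≤ (i:ℕ) + 1 ∧ (i:ℕ) ≤ (e i : ℕ) + 1 := by
        intro i
        have := hnear i.succ
        rw [happ i] at this
        simpa [Fin.val_succ] using this
      have hprod : ∏ i, Smat (n+1) i (σ i) = ∏ i, Smat n i (e i) := by
        rw [Fin.prod_univ_succ]
        have h0 : Smat (n+1) 0 (σ 0) = 1 := by
          rw [hp0]; simp [Smat]
        rw [h0, one_mul]
        apply Finset.prod_congr rfl
        intro x _
        rw [happ x]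
        exact Smat_eq _ _ _ _ (by simp [Fin.val_succ])
      rw [hsign, hprod]
      exact ih e hnear'
    · -- p = 1
      obtain ⟨m, rfl⟩ : ∃ m, n = m + 1 := ⟨n - 1, by have := p.isLt; omega⟩
      have hp : p = 1 := Fin.ext (by simpa using hpc)
      subst hp
      have happ : ∀ x : Fin (m+1), σ x.succ = Equiv.swap 0 1 ((e x).succ) := by
        intro x; rw [hσ, Equiv.Perm.decomposeFin_symm_apply_succ]
      have he0 : e 0 = 0 := by
        have hj : σ (e.symm 0).succ = 0 := by
          rw [happ, Equiv.apply_symm_apply]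
          simp [Fin.succ_zero_eq_one]
        have := (hnear (e.symm 0).succ).2
        rw [hj] at this
        simp only [Fin.val_succ, Fin.val_zero] at this
        have hj0 : e.symm 0 = 0 := Fin.ext (by simp only [Fin.val_zero]; omega)
        have h2 := congrArg e hj0
        rw [Equiv.apply_symm_apply] at h2
        exact h2.symm
      have happ' : ∀ x : Fin (m+1), x ≠ 0 → σ x.succ = (e x).succ := by
        intro x hx
        rw [happ]
        have hex : e x ≠ 0 := fun h => hx (e.injective (h.trans he0.symm))
        rw [Equiv.swap_apply_of_ne_of_ne]
        · exact (Fin.succ_ne_zero _)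
        · intro h
          exact hex (by
            have := congrArg Fin.val h
            simp [Fin.val_succ] at this
            exact this)
      have hσ1 : σ 1 = 0 := by
        rw [← Fin.succ_zero_eq_one, happ, he0]
        simp [Fin.succ_zero_eq_one]
      have hnear' : ∀ i : Fin (m+1), (e i : ℕ) ≤ (i:ℕ) + 1 ∧ (i:ℕ) ≤ (e i : ℕ) + 1 := by
        intro i
        by_cases hi : i = 0
        · subst hi; rw [he0]; simp
        · have := hnear i.succ
          rw [happ' i hi] at this
          simpa [Fin.val_succ] using this
      have hsign : ((Equiv.Perm.sign σ : ℤˣ) : ℤ) = -((Equiv.Perm.sign e : ℤˣ) : ℤ) := by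
        rw [hσ, Equiv.Perm.decomposeFin.symm_sign]
        norm_num [Fin.ext_iff]
      have hprod : ∏ i, Smat (m+2) i (σ i) = -∏ i, Smat (m+1) i (e i) := by
        rw [Fin.prod_univ_succ, Fin.prod_univ_succ]
        have h0 : Smat (m+2) 0 (σ 0) = 1 := by
          rw [hp0]; simp [Smat, Fin.ext_iff]
        have h1 : Smat (m+2) (0 : Fin (m+1)).succ (σ (0 : Fin (m+1)).succ) = -1 := by
          rw [Fin.succ_zero_eq_one, hσ1]; simp [Smat]
        rw [h0, h1, one_mul]
        rw [show ∏ i, Smat (m+1) i (e i) = Smat (m+1) 0 (e 0) * ∏ x : Fin m,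
            Smat (m+1) x.succ (e x.succ) from Fin.prod_univ_succ _]
        have he00 : Smat (m+1) 0 (e 0) = 1 := by rw [he0]; simp [Smat]
        rw [he00, one_mul, neg_one_mul, neg_inj]
        apply Finset.prod_congr rfl
        intro x _
        rw [happ' x.succ (Fin.succ_ne_zero x)]
        exact Smat_eq _ _ _ _ (by simp [Fin.val_succ])
      rw [hsign, hprod]
      rw [neg_mul_neg]
      exact ih e hnear'

theorem permanent_tridiag_eq_det_hadamard (n : ℕ) (A : Matrix (Fin n) (Fin n) ℤ)
    (htri : ∀ i j : Fin n, ((i : ℕ) + 1 < (j : ℕ) ∨ (j : ℕ) + 1 < (i : ℕ)) → A i j = 0) :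
    permanent A = (Matrix.hadamard A (Smat n)).det := by
  rw [← Matrix.det_transpose, Matrix.det_apply, permanent]
  apply Finset.sum_congr rfl
  intro σ _
  have hterm : ∀ i, (Matrix.hadamard A (Smat n)).transpose (σ i) i
      = A i (σ i) * Smat n i (σ i) := fun i => rfl
  simp only [hterm]
  rw [Finset.prod_mul_distrib]
  by_cases hnear : ∀ i : Fin n, (σ i : ℕ) ≤ (i:ℕ) + 1 ∧ (i:ℕ) ≤ (σ i : ℕ) + 1
  · have hk := key n σ hnear
    rw [Units.smul_def, smul_eq_mul]
    linear_combination (-(∏ i, A i (σ i))) * hk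
  · push_neg at hnear
    obtain ⟨i, hi⟩ := hnear
    have hA : A i (σ i) = 0 := by
      apply htri
      omega
    rw [Finset.prod_eq_zero (Finset.mem_univ i) hA]
    simp
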